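/- Let α1, α2, α3 ∈ ℂ with |α1|² > 2(|α2|² + |α3|²). Then for Ω = 0 the equation Ω⁴ − Ω²(K_ξ² + K_η² + 2Σ|α_j|²) + 4Ω(Re(conj(α1)α2α3) + Re(α1 conj(α2) α3)) + (K_ξ K_η + |α2|² − |α3|²)² + |α1|²(K_ξ² + K_η² + |α1|²) = 2Re(|α1|² α3² + α2² conj(α1)²) has no real solution (K_ξ, K_η) ∈ ℝ²; in particular 0 is in a spectral gap of the four-mode coupled mode operator. -/

import Mathlib

/-- if `|α1|² > 2(|α2|² + |α3|²)` then the four-mode dispersion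
relation at `Ω = 0` has no real solution `(Kξ, Kη)`; `0` lies in a spectral gap. -/
theorem stmt7 (α1 α2 α3 : ℂ)
    (h : ‖α1‖ ^ 2 > 2 * (‖α2‖ ^ 2 + ‖α3‖ ^ 2)) :
    ∀ Ω : ℝ, Ω = 0 → ∀ Kξ Kη : ℝ,
      ¬(Ω ^ 4
          - Ω ^ 2 * (Kξ ^ 2 + Kη ^ 2
              + 2 * (‖α1‖ ^ 2 + ‖α2‖ ^ 2 + ‖α3‖ ^ 2))
          + 4 * Ω * (((starRingEnd ℂ) α1 * α2 * α3).re + (α1 * (starRingEnd ℂ) α2 * α3).re)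
          + (Kξ * Kη + ‖α2‖ ^ 2 - ‖α3‖ ^ 2) ^ 2
          + ‖α1‖ ^ 2 * (Kξ ^ 2 + Kη ^ 2 + ‖α1‖ ^ 2)
        = 2 * (((‖α1‖ : ℂ) ^ 2 * α3 ^ 2
              + α2 ^ 2 * ((starRingEnd ℂ) α1) ^ 2).re)) := by
  intro Ω hΩ Kξ Kη heq
  subst hΩ
  set z : ℂ := (‖α1‖ : ℂ) ^ 2 * α3 ^ 2 + α2 ^ 2 * ((starRingEnd ℂ) α1) ^ 2 with hz
  have hre : z.re ≤ ‖z‖ := Complex.re_le_norm z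
  have habs : ‖z‖ ≤ ‖α1‖ ^ 2 * ‖α3‖ ^ 2
      + ‖α2‖ ^ 2 * ‖α1‖ ^ 2 := by
    refine le_trans (norm_add_le _ _) ?_
    simp [norm_mul, norm_pow, Complex.norm_real, abs_of_nonneg (norm_nonneg α1)]
  have h1 : (0:ℝ) ≤ (Kξ * Kη + ‖α2‖ ^ 2 - ‖α3‖ ^ 2) ^ 2 := sq_nonneg _
  have h2 : (0:ℝ) ≤ Kξ ^ 2 := sq_nonneg _
  have h3 : (0:ℝ) ≤ Kη ^ 2 := sq_nonneg _
  have ha1 : (0:ℝ) ≤ ‖α1‖ ^ 2 := sq_nonneg _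
  nlinarith [sq_nonneg (‖α2‖), sq_nonneg (‖α3‖)]
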